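/- Let f be a tempered distribution on ℝ^d whose Fourier transform is an atomic measure f̂ = Σ_n b_n δ_{s_n} with Σ_n |b_n|·|ψ(s_n)| < ∞ for every Schwartz function ψ (equivalently |f̂| = Σ|b_n|δ_{s_n} is a tempered measure). Then for every Schwartz function φ, the function t ↦ f(φ(·−t)) equals Σ_n b_n·φ̌(s_n)·e^{2πi⟨t,s_n⟩}, where φ̌ is the inverse Fourier transform of φ, and this function is Bohr almost periodic on ℝ^d. -/

import Mathlib

open MeasureTheory Metric Filter Topology SchwartzMap
open scoped FourierTransform RealInnerProductSpace

noncomputable section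

abbrev Ed (d : ℕ) := EuclideanSpace ℝ (Fin d)

/-- A set is relatively dense if some radius `R` works: every ball of radius `R` meets it. -/
def IsRelativelyDense {d : ℕ} (A : Set (Ed d)) : Prop :=
  ∃ R : ℝ, ∀ x : Ed d, (Metric.ball x R ∩ A).Nonempty

/-- The set of ε-almost periods of a function. -/
def almostPeriods {d : ℕ} {F : Type*} [NormedAddCommGroup F] (f : Ed d → F) (ε : ℝ) :
    Set (Ed d) :=
  {τ | ∀ t : Ed d, ‖f (t + τ) - f t‖ < ε}

/-- Bohr almost periodic function on `ℝ^d`. -/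
def IsBohrAP {d : ℕ} {F : Type*} [NormedAddCommGroup F] (f : Ed d → F) : Prop :=
  Continuous f ∧ ∀ ε > (0 : ℝ), IsRelativelyDense (almostPeriods f ε)

lemma hasTemperateGrowth_sub_const {d : ℕ} (t : EuclideanSpace ℝ (Fin d)) :
    Function.HasTemperateGrowth (fun x : EuclideanSpace ℝ (Fin d) => x - t) := by
  apply Function.HasTemperateGrowth.of_fderiv (k := 1) (C := 1 + ‖t‖)
  · have h : (fderiv ℝ (fun x : EuclideanSpace ℝ (Fin d) => x - t))
        = fun _ => ContinuousLinearMap.id ℝ (EuclideanSpace ℝ (Fin d)) := by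
      funext x
      rw [fderiv_sub_const]
      simp [fderiv_id']
    rw [h]
    exact Function.HasTemperateGrowth.const _
  · exact differentiable_id.sub_const t
  · intro x
    have : ‖x - t‖ ≤ ‖x‖ + ‖t‖ := norm_sub_le x t
    nlinarith [norm_nonneg x, norm_nonneg t]

/-- Translation `φ ↦ φ(· − t)` as a continuous linear map on the Schwartz space. -/
def translateS {d : ℕ} (t : EuclideanSpace ℝ (Fin d)) :
    𝓢(EuclideanSpace ℝ (Fin d), ℂ) →L[ℂ] 𝓢(EuclideanSpace ℝ (Fin d), ℂ) :=
  SchwartzMap.compCLMOfAntilipschitz ℂ (hasTemperateGrowth_sub_const t)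
    ((Isometry.of_dist_eq (fun a b => dist_sub_right a b t)).antilipschitz)

/-- Lemma 2 of the paper: if `f` is a tempered distribution whose Fourier transform is the
atomic measure `Σ b_n δ_{s_n}` with `Σ |b_n||ψ(s_n)| < ∞` for every Schwartz `ψ`, then for
every Schwartz `φ` the function `t ↦ f(φ(·−t))` equals the exponential sum
`Σ b_n φ̌(s_n) e^{2πi⟨t,s_n⟩}` and is Bohr almost periodic. -/
lemma expSum_isBohrAP {d : ℕ} (c : ℕ → ℂ) (s : ℕ → Ed d)
    (hsum : Summable fun n => ‖c n‖) :
    IsBohrAP (fun t : Ed d =>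
      ∑' n : ℕ, c n * Complex.exp (((2 * Real.pi * ⟪t, s n⟫ : ℝ) : ℂ) * Complex.I)) := by
  set E : Ed d → ℕ → ℂ :=
    fun t n => Complex.exp (((2 * Real.pi * ⟪t, s n⟫ : ℝ) : ℂ) * Complex.I) with hEdef
  have hE1 : ∀ t n, ‖E t n‖ = 1 := fun t n => Complex.norm_exp_ofReal_mul_I _
  have hEadd : ∀ t τ n, E (t + τ) n = E t n * E τ n := by
    intro t τ n
    simp only [hEdef, ← Complex.exp_add, inner_add_left]
    push_cast
    ring_nf
  have hEcont : ∀ n, Continuous fun t : Ed d => E t n := by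
    intro n
    exact Complex.continuous_exp.comp
      (((Complex.continuous_ofReal.comp
        ((continuous_const.mul ((continuous_id.inner continuous_const))))).mul continuous_const))
  have htermsum : ∀ τ, Summable fun n => c n * E τ n := by
    intro τ
    refine Summable.of_norm (hsum.congr fun n => ?_)
    rw [norm_mul, hE1, mul_one]
  constructor
  · refine continuous_tsum (fun n => (continuous_const.mul (hEcont n))) hsum fun n t => ?_
    rw [norm_mul, hE1]
    simp
  · intro ε hε
    set C := ∑' n, ‖c n‖ with hC
    have hC0 : 0 ≤ C := tsum_nonneg fun n => norm_nonneg _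
    obtain ⟨N, hN⟩ : ∃ N : ℕ, ∑' k, ‖c (k + N)‖ < ε / 4 :=
      ((tendsto_sum_nat_add fun n => ‖c n‖).eventually
        (gt_mem_nhds (by positivity : (0:ℝ) < ε / 4))).exists
    set δ : ℝ := ε / (4 * (C + 1)) with hδ
    have hδ0 : 0 < δ := by positivity
    set B : Set (Ed d) := {τ | ∀ n < N, ‖E τ n - 1‖ < δ} with hB
    -- Step A : B ⊆ almostPeriods g ε
    have hBsub : B ⊆ almostPeriods
        (fun t : Ed d => ∑' n : ℕ, c n * E t n) ε := by
      intro τ hτ t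
      show ‖(∑' n : ℕ, c n * E (t + τ) n) - ∑' n : ℕ, c n * E t n‖ < ε
      have hdiff : (∑' n : ℕ, c n * E (t + τ) n) - ∑' n : ℕ, c n * E t n
          = ∑' n : ℕ, c n * E t n * (E τ n - 1) := by
        rw [← Summable.tsum_sub (htermsum (t + τ)) (htermsum t)]
        refine tsum_congr fun n => ?_
        rw [hEadd]
        ring
      rw [hdiff]
      have hh : Summable fun n => ‖c n‖ * ‖E τ n - 1‖ := by
        refine Summable.of_nonneg_of_le (fun n => by positivity) (fun n => ?_) (hsum.mul_left 2)
        have : ‖E τ n - 1‖ ≤ 2 := by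
          calc ‖E τ n - 1‖ ≤ ‖E τ n‖ + ‖(1:ℂ)‖ := norm_sub_le _ _
          _ = 2 := by rw [hE1]; norm_num
        calc ‖c n‖ * ‖E τ n - 1‖ ≤ ‖c n‖ * 2 := by
              exact mul_le_mul_of_nonneg_left this (norm_nonneg _)
        _ = 2 * ‖c n‖ := by ring
      have hbound : ‖∑' n : ℕ, c n * E t n * (E τ n - 1)‖
          ≤ ∑' n : ℕ, ‖c n‖ * ‖E τ n - 1‖ := by
        have := norm_tsum_le_tsum_norm (f := fun n => c n * E t n * (E τ n - 1))
          (by refine hh.congr fun n => ?_; rw [norm_mul, norm_mul, hE1, mul_one])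
        refine le_trans this (le_of_eq (tsum_congr fun n => ?_))
        rw [norm_mul, norm_mul, hE1, mul_one]
      have hsplit : ∑' i : ℕ, ‖c i‖ * ‖E τ i - 1‖
          = ∑ i ∈ Finset.range N, ‖c i‖ * ‖E τ i - 1‖
            + ∑' i : ℕ, ‖c (i + N)‖ * ‖E τ (i + N) - 1‖ :=
        (Summable.sum_add_tsum_nat_add N hh).symm
      have hpart : ∑ i ∈ Finset.range N, ‖c i‖ * ‖E τ i - 1‖ < ε / 4 := by
        have h1 : ∑ i ∈ Finset.range N, ‖c i‖ * ‖E τ i - 1‖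
            ≤ ∑ i ∈ Finset.range N, ‖c i‖ * δ := by
          refine Finset.sum_le_sum fun i hi => ?_
          exact mul_le_mul_of_nonneg_left (le_of_lt (hτ i (Finset.mem_range.mp hi)))
            (norm_nonneg _)
        have h2 : ∑ i ∈ Finset.range N, ‖c i‖ * δ = (∑ i ∈ Finset.range N, ‖c i‖) * δ :=
          (Finset.sum_mul ..).symm
        have h3 : (∑ i ∈ Finset.range N, ‖c i‖) ≤ C :=
          Summable.sum_le_tsum _ (fun i _ => norm_nonneg _) hsum
        have h4 : (∑ i ∈ Finset.range N, ‖c i‖) * δ ≤ C * δ :=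
          mul_le_mul_of_nonneg_right h3 (le_of_lt hδ0)
        have h5 : C * δ < ε / 4 := by
          have hpos : (0:ℝ) < 4 * (C + 1) := by positivity
          rw [hδ, ← mul_div_assoc, div_lt_div_iff₀ hpos (by norm_num : (0:ℝ) < 4)]
          nlinarith
        linarith
      have htail : ∑' i : ℕ, ‖c (i + N)‖ * ‖E τ (i + N) - 1‖ < ε / 2 := by
        have hhc : Summable fun i => ‖c (i + N)‖ * ‖E τ (i + N) - 1‖ :=
          (summable_nat_add_iff (f := fun n => ‖c n‖ * ‖E τ n - 1‖) N).mpr hh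
        have hsc : Summable fun i : ℕ => 2 * ‖c (i + N)‖ :=
          ((summable_nat_add_iff (f := fun n => ‖c n‖) N).mpr hsum).mul_left 2
        have h1 : ∑' i : ℕ, ‖c (i + N)‖ * ‖E τ (i + N) - 1‖
            ≤ ∑' i : ℕ, 2 * ‖c (i + N)‖ := by
          refine Summable.tsum_le_tsum (fun i => ?_) hhc hsc
          have : ‖E τ (i + N) - 1‖ ≤ 2 := by
            calc ‖E τ (i + N) - 1‖ ≤ ‖E τ (i + N)‖ + ‖(1:ℂ)‖ := norm_sub_le _ _
            _ = 2 := by rw [hE1]; norm_num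
          calc ‖c (i + N)‖ * ‖E τ (i + N) - 1‖ ≤ ‖c (i + N)‖ * 2 :=
                mul_le_mul_of_nonneg_left this (norm_nonneg _)
          _ = 2 * ‖c (i + N)‖ := by ring
        have h2 : ∑' i : ℕ, 2 * ‖c (i + N)‖ = 2 * ∑' i : ℕ, ‖c (i + N)‖ := tsum_mul_left
        linarith
      calc ‖∑' n : ℕ, c n * E t n * (E τ n - 1)‖
          ≤ ∑' n : ℕ, ‖c n‖ * ‖E τ n - 1‖ := hbound
        _ = ∑ i ∈ Finset.range N, ‖c i‖ * ‖E τ i - 1‖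
            + ∑' i : ℕ, ‖c (i + N)‖ * ‖E τ (i + N) - 1‖ := hsplit
        _ < ε / 4 + ε / 2 := by exact add_lt_add hpart htail
        _ < ε := by linarith
    -- Step C : B is relatively dense
    have hBdense : IsRelativelyDense B := by
      set χ : Ed d → (Fin N → ℂ) := fun τ i => E τ (i : ℕ) with hχ
      have hbd : Bornology.IsBounded (Set.range χ) := by
        refine (Metric.isBounded_closedBall (x := (0 : Fin N → ℂ)) (r := 1)).subset ?_
        rintro - ⟨τ, rfl⟩
        rw [Metric.mem_closedBall, dist_zero_right]
        refine (pi_norm_le_iff_of_nonneg zero_le_one).mpr fun i => ?_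
        rw [hE1]
      have hK : IsCompact (closure (Set.range χ)) := hbd.isCompact_closure
      have hcover : closure (Set.range χ) ⊆ ⋃ τ : Ed d, Metric.ball (χ τ) (δ/2) := by
        intro x hx
        obtain ⟨y, ⟨τ, rfl⟩, hy⟩ := Metric.mem_closure_iff.mp hx (δ/2) (by positivity)
        exact Set.mem_iUnion.mpr ⟨τ, Metric.mem_ball.mpr hy⟩
      obtain ⟨T, hT⟩ := hK.elim_finite_subcover _ (fun τ => Metric.isOpen_ball) hcover
      refine ⟨1 + ∑ τ ∈ T, ‖τ‖, fun x => ?_⟩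
      have hx : χ x ∈ closure (Set.range χ) := subset_closure (Set.mem_range_self x)
      obtain ⟨τ₀, hτ₀T, hτ₀⟩ := Set.mem_iUnion₂.mp (hT hx)
      rw [Metric.mem_ball] at hτ₀
      refine ⟨x - τ₀, ?_, ?_⟩
      · rw [Metric.mem_ball, dist_eq_norm, sub_sub_cancel_left, norm_neg]
        have h1 : ‖τ₀‖ ≤ ∑ τ ∈ T, ‖τ‖ :=
          Finset.single_le_sum (fun τ _ => norm_nonneg τ) hτ₀T
        linarith
      · intro n hn
        have hxe : E x n = E (x - τ₀) n * E τ₀ n := by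
          rw [← hEadd, sub_add_cancel]
        have h2 : ‖E (x - τ₀) n - 1‖ = ‖E x n - E τ₀ n‖ := by
          rw [hxe]
          calc ‖E (x - τ₀) n - 1‖ = ‖(E (x - τ₀) n - 1) * E τ₀ n‖ := by
                rw [norm_mul, hE1, mul_one]
          _ = ‖E (x - τ₀) n * E τ₀ n - E τ₀ n‖ := by ring_nf
        have h3 : ‖E x n - E τ₀ n‖ ≤ dist (χ x) (χ τ₀) := by
          have := dist_le_pi_dist (χ x) (χ τ₀) ⟨n, hn⟩
          rwa [dist_eq_norm] at this
        rw [h2]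
        calc ‖E x n - E τ₀ n‖ ≤ dist (χ x) (χ τ₀) := h3
        _ < δ / 2 := hτ₀
        _ < δ := by linarith
    obtain ⟨R, hR⟩ := hBdense
    exact ⟨R, fun x => by
      obtain ⟨σ, hσball, hσB⟩ := hR x
      exact ⟨σ, hσball, hBsub hσB⟩⟩

lemma finv_translate {d : ℕ} (φ : 𝓢(Ed d, ℂ)) (t ξ : Ed d) :
    𝓕⁻ (fun x => φ (x - t)) ξ
      = Complex.exp (((2 * Real.pi * ⟪t, ξ⟫ : ℝ) : ℂ) * Complex.I) * 𝓕⁻ (fun y => φ y) ξ := by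
  rw [Real.fourierInv_eq', Real.fourierInv_eq']
  rw [← MeasureTheory.integral_add_right_eq_self
      (fun v => Complex.exp ((↑(2 * Real.pi * ⟪v, ξ⟫) : ℂ) * Complex.I) • φ (v - t)) t]
  simp only [add_sub_cancel_right]
  rw [← MeasureTheory.integral_const_mul]
  congr 1
  funext y
  rw [smul_eq_mul, smul_eq_mul, inner_add_left, ← mul_assoc, ← Complex.exp_add]
  push_cast
  ring_nf

theorem tempered_with_atomic_FT_is_AP {d : ℕ}
    (f : 𝓢(Ed d, ℂ) →L[ℂ] ℂ) (b : ℕ → ℂ) (s : ℕ → Ed d)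
    (habs : ∀ ψ : 𝓢(Ed d, ℂ), Summable fun n => ‖b n‖ * ‖ψ (s n)‖)
    (hFT : ∀ φ : 𝓢(Ed d, ℂ),
      f (SchwartzMap.fourierTransformCLM ℂ φ) = ∑' n : ℕ, b n * φ (s n)) :
    ∀ φ : 𝓢(Ed d, ℂ),
      (∀ t : Ed d, f (translateS t φ) =
        ∑' n : ℕ, b n * (𝓕⁻ (fun x => φ x) (s n)) *
          Complex.exp (2 * Real.pi * Complex.I * ((⟪t, s n⟫ : ℝ) : ℂ))) ∧
      IsBohrAP (fun t : Ed d => f (translateS t φ)) := by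
  intro φ
  have hval : ∀ t : Ed d, f (translateS t φ) =
      ∑' n : ℕ, b n * (𝓕⁻ (fun x => φ x) (s n)) *
        Complex.exp (2 * Real.pi * Complex.I * ((⟪t, s n⟫ : ℝ) : ℂ)) := by
    intro t
    have h1 : translateS t φ
        = fourierTransformCLM ℂ ((FourierTransform.fourierCLE ℂ 𝓢(Ed d, ℂ) (F := 𝓢(Ed d, ℂ))).symm (translateS t φ)) :=
      ((FourierTransform.fourierCLE ℂ 𝓢(Ed d, ℂ) (F := 𝓢(Ed d, ℂ))).apply_symm_apply (translateS t φ)).symm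
    conv_lhs => rw [h1]
    rw [hFT]
    refine tsum_congr fun n => ?_
    have h2 : ((FourierTransform.fourierCLE ℂ 𝓢(Ed d, ℂ) (F := 𝓢(Ed d, ℂ))).symm (translateS t φ)) (s n)
        = 𝓕⁻ (fun x => φ (x - t)) (s n) := by
      have hcle := SchwartzMap.fourierTransformCLE_symm_apply (R := ℂ) (translateS t φ)
      have h3 : ⇑(translateS t φ) = fun x => φ (x - t) :=
        SchwartzMap.compCLMOfAntilipschitz_apply ℂ _ _ φ
      rw [show ((FourierTransform.fourierCLE ℂ 𝓢(Ed d, ℂ) (F := 𝓢(Ed d, ℂ))).symm (translateS t φ)) (s n)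
          = (⇑((FourierTransform.fourierCLE ℂ 𝓢(Ed d, ℂ) (F := 𝓢(Ed d, ℂ))).symm (translateS t φ))) (s n) from rfl, hcle, SchwartzMap.fourierInv_coe, h3]
    rw [h2, finv_translate]
    push_cast
    ring_nf
  refine ⟨hval, ?_⟩
  have hfun : (fun t : Ed d => f (translateS t φ))
      = fun t : Ed d => ∑' n : ℕ, (b n * 𝓕⁻ (fun x => φ x) (s n)) *
          Complex.exp (((2 * Real.pi * ⟪t, s n⟫ : ℝ) : ℂ) * Complex.I) := by
    funext t
    rw [hval t]
    refine tsum_congr fun n => ?_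
    have harg : (2 * (Real.pi : ℂ) * Complex.I * ((⟪t, s n⟫ : ℝ) : ℂ))
        = ((2 * Real.pi * ⟪t, s n⟫ : ℝ) : ℂ) * Complex.I := by
      push_cast
      ring
    rw [harg]
  rw [hfun]
  refine expSum_isBohrAP _ s ?_
  have hψ := habs ((FourierTransform.fourierCLE ℂ 𝓢(Ed d, ℂ) (F := 𝓢(Ed d, ℂ))).symm φ)
  refine hψ.congr fun n => ?_
  rw [show (((FourierTransform.fourierCLE ℂ 𝓢(Ed d, ℂ) (F := 𝓢(Ed d, ℂ))).symm φ) (s n))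
      = (⇑((FourierTransform.fourierCLE ℂ 𝓢(Ed d, ℂ) (F := 𝓢(Ed d, ℂ))).symm φ)) (s n) from rfl,
    SchwartzMap.fourierTransformCLE_symm_apply, SchwartzMap.fourierInv_coe, norm_mul]
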